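/- If F is a forest on n vertices with exactly j connected components, then Σ_{λ ⊢ n, l(λ)=k} c_λ(F) = (−1)^{n−k} · C(n−j, k−j) for every k, where c_λ(F) are the coefficients of X_F in the power-sum basis. -/

import Mathlib

open SimpleGraph

/-- Proper coloring for an edge set over `Sym2 V` (loops allowed): adjacent (or equal, for a
loop) endpoints must receive different colors. -/
def ProperCol {V : Type*} (E : Set (Sym2 V)) (k : V -> Nat) : Prop :=
  forall u v : V, s(u, v) ∈ E -> k u ≠ k v

/-- Weighted chromatic symmetric function `X_{(G,w)}` as a formal power series in the
variables `x_0, x_1, …` : the coefficient of a monomial `d` is the number of proper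
colorings whose total weight in color `i` is `d i` for every `i`. -/
noncomputable def csfW {V : Type*} (E : Set (Sym2 V)) (w : V -> Nat) : MvPowerSeries Nat Int :=
  fun d => (Nat.card {k : V -> Nat |
    ProperCol E k ∧ forall i : Nat, (∑ᶠ v ∈ {v : V | k v = i}, w v) = d i} : Int)

/-- Chromatic symmetric function `X_G` of a simple graph. -/
noncomputable def csf {V : Type*} (G : SimpleGraph V) : MvPowerSeries Nat Int :=
  csfW G.edgeSet (fun _ => 1)

/-- The power-sum symmetric function `p_k = Σ_i x_i ^ k`. -/
noncomputable def psum (k : Nat) : MvPowerSeries Nat Int :=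
  open scoped Classical in
  fun d => if ∃ i : Nat, d = Finsupp.single i k then 1 else 0

/-- `p_lam` for a multiset of parts `lam`. -/
noncomputable def pProd (m : Multiset Nat) : MvPowerSeries Nat Int :=
  (m.map psum).prod


open Finset in
open scoped Classical in
def CCond {ι : Type*} [Fintype ι] (g : ι → ℕ) (d : ℕ →₀ ℕ) : Set (ι → ℕ) :=
  {f | ∀ t, (∑ i, if f i = t then g i else 0) = d t}

section CoeffLemmas
open Finset
open scoped Classical

lemma mem_ccond_apply_mem_support {ι : Type*} [Fintype ι] {g : ι → ℕ}
    {d : ℕ →₀ ℕ} {f : ι → ℕ} (hf : f ∈ CCond g d) (i : ι) : g i ≤ d (f i) := by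
  have h := hf (f i)
  rw [← h]
  have : ∀ j ∈ (univ : Finset ι), 0 ≤ if f j = f i then g j else 0 := fun j _ => Nat.zero_le _
  calc g i = (if f i = f i then g i else 0) := by simp
  _ ≤ ∑ j, if f j = f i then g j else 0 := Finset.single_le_sum this (mem_univ i)

lemma ccond_finite {ι : Type*} [Fintype ι] (g : ι → ℕ) (hg : ∀ i, g i ≠ 0) (d : ℕ →₀ ℕ) :
    (CCond g d).Finite := by
  apply Set.Finite.subset (Set.Finite.pi (fun _ : ι => d.support.finite_toSet))
  intro f hf
  rw [Set.mem_pi]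
  intro i _
  simp only [Finset.coe_sort_coe, Finset.mem_coe, Finsupp.mem_support_iff]
  have h1 := mem_ccond_apply_mem_support hf i
  have h2 := hg i
  omega

lemma ccond_succ {n : ℕ} (g : Fin (n+1) → ℕ) (d : ℕ →₀ ℕ) (i : ℕ) (hi : g 0 ≤ d i)
    (f' : Fin n → ℕ) :
    (Fin.cons i f' ∈ CCond g d) ↔
      f' ∈ CCond (fun x : Fin n => g x.succ) (d - Finsupp.single i (g 0)) := by
  have key : ∀ t, (∑ x : Fin (n+1), if Fin.cons i f' x = t then g x else 0)
      = (Finsupp.single i (g 0)) t + ∑ x : Fin n, if f' x = t then g x.succ else 0 := by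
    intro t
    rw [Fin.sum_univ_succ]
    simp only [Fin.cons_zero, Fin.cons_succ]
    congr 1
    simp [Finsupp.single_apply]
  have hsub : ∀ t, (d - Finsupp.single i (g 0)) t = d t - (Finsupp.single i (g 0)) t := by
    intro t; simp [Finsupp.coe_tsub]
  have hle : ∀ t, (Finsupp.single i (g 0)) t ≤ d t := by
    intro t
    rcases eq_or_ne i t with rfl | h
    · simpa using hi
    · simp [Finsupp.single_apply, h]
  simp only [CCond, Set.mem_setOf_eq]
  constructor
  · intro h t
    have h2 := h t
    rw [key t] at h2
    rw [hsub t]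
    omega
  · intro h t
    have h2 := h t
    rw [hsub t] at h2
    have h3 := hle t
    rw [key t]
    omega

lemma coeff_prod_psum : ∀ (n : ℕ) (g : Fin n → ℕ), (∀ i, g i ≠ 0) → ∀ d : ℕ →₀ ℕ,
    (∏ i, psum (g i)) d = (Nat.card (CCond g d) : ℤ) := by
  intro n
  induction n with
  | zero =>
    intro g hg d
    rw [Finset.univ_eq_empty, Finset.prod_empty]
    have h1 : (1 : MvPowerSeries ℕ ℤ) d = if d = 0 then 1 else 0 := by
      rw [show (1 : MvPowerSeries ℕ ℤ) d = MvPowerSeries.coeff d 1 from rfl,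
        MvPowerSeries.coeff_one]
    rw [h1]
    rcases eq_or_ne d 0 with rfl | hd
    · have h2 : CCond g (0 : ℕ →₀ ℕ) = Set.univ := by
        ext f; simp [CCond]
      rw [if_pos rfl, h2, Nat.card_congr (Equiv.Set.univ (Fin 0 → ℕ)),
        Nat.card_eq_fintype_card]
      simp
    · have h2 : CCond g d = ∅ := by
        ext f
        simp only [CCond, Set.mem_setOf_eq, Set.mem_empty_iff_false, iff_false, not_forall]
        have hex : ∃ t, d t ≠ 0 := by
          by_contra hcon
          push_neg at hcon
          exact hd (Finsupp.ext fun t => hcon t)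
        obtain ⟨t, ht⟩ := hex
        exact ⟨t, by simp; omega⟩
      rw [h2]
      simp [hd]
  | succ n ih =>
    intro g hg d
    have h0 : g 0 ≠ 0 := hg 0
    set P : MvPowerSeries ℕ ℤ := ∏ i : Fin n, psum (g i.succ) with hP
    set T : Finset ℕ := d.support.filter (fun i => g 0 ≤ d i) with hT
    have hmemT : ∀ i : ℕ, i ∈ T ↔ g 0 ≤ d i := by
      intro i
      simp only [hT, mem_filter, Finsupp.mem_support_iff]
      constructor
      · exact fun h => h.2
      · intro h; have := h0; constructor <;> omega
    rw [Fin.prod_univ_succ]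
    have hmul : (psum (g 0) * P) d
        = ∑ p ∈ Finset.HasAntidiagonal.antidiagonal d, psum (g 0) p.1 * P p.2 :=
      MvPowerSeries.coeff_mul d _ _
    rw [hmul]
    have step1 : ∑ p ∈ Finset.HasAntidiagonal.antidiagonal d, psum (g 0) p.1 * P p.2
        = ∑ p ∈ (Finset.HasAntidiagonal.antidiagonal d).filter
            (fun p => ∃ i, p.1 = Finsupp.single i (g 0)), P p.2 := by
      rw [Finset.sum_filter]
      refine Finset.sum_congr rfl fun p _ => ?_
      by_cases hex : ∃ i, p.1 = Finsupp.single i (g 0)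
      · simp [psum, hex]
      · simp [psum, hex]
    have step2 : ∑ p ∈ (Finset.HasAntidiagonal.antidiagonal d).filter
            (fun p => ∃ i, p.1 = Finsupp.single i (g 0)), P p.2
        = ∑ i ∈ T, P (d - Finsupp.single i (g 0)) := by
      apply Finset.sum_bij'
        (i := fun p (hp : p ∈ (Finset.HasAntidiagonal.antidiagonal d).filter
            (fun p => ∃ i, p.1 = Finsupp.single i (g 0))) =>
          Classical.choose (Finset.mem_filter.mp hp).2)
        (j := fun i _ => (Finsupp.single i (g 0), d - Finsupp.single i (g 0)))
      case hi =>
        intro p hp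
        have hps := Classical.choose_spec (Finset.mem_filter.mp hp).2
        have hsum : p.1 + p.2 = d := Finset.HasAntidiagonal.mem_antidiagonal.mp (Finset.mem_filter.mp hp).1
        rw [hmemT]
        have hv : p.1 (Classical.choose (Finset.mem_filter.mp hp).2) = g 0 :=
          (DFunLike.congr_fun hps _).trans Finsupp.single_eq_same
        have hd : p.1 (Classical.choose (Finset.mem_filter.mp hp).2)
              + p.2 (Classical.choose (Finset.mem_filter.mp hp).2)
            = d (Classical.choose (Finset.mem_filter.mp hp).2) :=
          (Finsupp.add_apply _ _ _).symm.trans (DFunLike.congr_fun hsum _)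
        omega
      case hj =>
        intro i hi
        rw [Finset.mem_filter]
        refine ⟨Finset.HasAntidiagonal.mem_antidiagonal.mpr
          (add_tsub_cancel_of_le (Finsupp.single_le_iff.mpr ((hmemT i).mp hi))), ⟨i, rfl⟩⟩
      case left_neg =>
        intro p hp
        have hps := Classical.choose_spec (Finset.mem_filter.mp hp).2
        have hsum : p.1 + p.2 = d := Finset.HasAntidiagonal.mem_antidiagonal.mp (Finset.mem_filter.mp hp).1
        have h2 : p.2 = d - Finsupp.single (Classical.choose (Finset.mem_filter.mp hp).2) (g 0) := by
          rw [← hps]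
          exact eq_tsub_of_add_eq (by rw [add_comm]; exact hsum)
        exact Prod.ext hps.symm h2.symm
      case right_neg =>
        intro i hi
        have hgen : ∀ (p : ∃ x, (Finsupp.single i (g 0) : ℕ →₀ ℕ) = Finsupp.single x (g 0)),
            Classical.choose p = i := fun p =>
          (Finsupp.single_left_injective h0 (Classical.choose_spec p).symm)
        exact hgen _
      case h =>
        intro p hp
        have hps := Classical.choose_spec (Finset.mem_filter.mp hp).2
        have hsum : p.1 + p.2 = d := Finset.HasAntidiagonal.mem_antidiagonal.mp (Finset.mem_filter.mp hp).1
        have h2 : p.2 = d - Finsupp.single (Classical.choose (Finset.mem_filter.mp hp).2) (g 0) := by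
          rw [← hps]
          exact eq_tsub_of_add_eq (by rw [add_comm]; exact hsum)
        rw [h2]
    rw [step1, step2]
    have hg' : ∀ i : Fin n, g i.succ ≠ 0 := fun i => hg i.succ
    have step3 : Nat.card (CCond g d)
        = ∑ i ∈ T, Nat.card (CCond (fun x : Fin n => g x.succ) (d - Finsupp.single i (g 0))) := by
      have hfin := ccond_finite g hg d
      rw [Nat.card_eq_card_finite_toFinset hfin]
      rw [Finset.card_eq_sum_card_fiberwise (f := fun f : Fin (n+1) → ℕ => f 0) (t := T)
        (fun f hf => by
          rw [Finset.mem_coe, hmemT]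
          exact mem_ccond_apply_mem_support (hfin.mem_toFinset.mp hf) 0)]
      refine Finset.sum_congr rfl fun i hi => ?_
      have hfin' := ccond_finite (fun x : Fin n => g x.succ) hg' (d - Finsupp.single i (g 0))
      rw [Nat.card_eq_card_finite_toFinset hfin']
      apply Finset.card_bij' (i := fun f _ => Fin.tail f) (j := fun f' _ => Fin.cons i f')
      case hi =>
        intro f hf
        rw [Finset.mem_filter] at hf
        obtain ⟨hf1, hf2⟩ := hf
        rw [hfin'.mem_toFinset]
        rw [← (ccond_succ g d i ((hmemT i).mp hi) (Fin.tail f))]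
        rw [← hf2, Fin.cons_self_tail]
        exact hfin.mem_toFinset.mp hf1
      case hj =>
        intro f' hf'
        rw [Finset.mem_filter, hfin.mem_toFinset]
        constructor
        · exact (ccond_succ g d i ((hmemT i).mp hi) f').mpr (hfin'.mem_toFinset.mp hf')
        · simp
      case left_inv =>
        intro f hf
        rw [Finset.mem_filter] at hf
        rw [← hf.2, Fin.cons_self_tail]
      case right_inv =>
        intro f' _
        simp [Fin.tail_cons]
    rw [step3]
    push_cast
    refine Finset.sum_congr rfl fun i _ => ?_
    exact ih (fun x : Fin n => g x.succ) hg' (d - Finsupp.single i (g 0))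

lemma coeff_prod_psum' {ι : Type*} [Fintype ι] (g : ι → ℕ) (hg : ∀ i, g i ≠ 0) (d : ℕ →₀ ℕ) :
    (∏ i, psum (g i)) d = (Nat.card (CCond g d) : ℤ) := by
  classical
  set e := Fintype.equivFin ι with he
  have hprod : (∏ i, psum (g i)) = ∏ i' : Fin (Fintype.card ι), psum (g (e.symm i')) :=
    (Equiv.prod_comp e.symm (fun i => psum (g i))).symm
  have hcard : Nat.card (CCond g d) = Nat.card (CCond (fun i' => g (e.symm i')) d) := by
    apply Nat.card_congr
    refine Equiv.subtypeEquiv (Equiv.arrowCongr e (Equiv.refl ℕ)) ?_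
    intro f
    simp only [CCond, Set.mem_setOf_eq, Equiv.arrowCongr_apply, Equiv.coe_refl,
      Function.comp_apply, Function.comp_def, id_eq]
    constructor
    · intro h t
      rw [← h t]
      exact Equiv.sum_comp e.symm (fun i => if f i = t then g i else 0)
    · intro h t
      rw [← h t]
      exact (Equiv.sum_comp e.symm (fun i => if f i = t then g i else 0)).symm
  rw [hprod, hcard]
  exact coeff_prod_psum _ _ (fun i' => hg (e.symm i')) d

end CoeffLemmas
section GraphLemmas
open Finset
open scoped Classical

variable {V : Type*} [Fintype V]

lemma reach_split {G : SimpleGraph V} {u v x y : V} (h : G.Reachable x y) :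
    (G.deleteEdges {s(u,v)}).Reachable x y ∨
      ((G.deleteEdges {s(u,v)}).Reachable x u ∧ (G.deleteEdges {s(u,v)}).Reachable v y) ∨
      ((G.deleteEdges {s(u,v)}).Reachable x v ∧ (G.deleteEdges {s(u,v)}).Reachable u y) := by
  obtain ⟨w⟩ := h
  induction w with
  | nil => exact Or.inl (Reachable.refl _)
  | @cons x' z' y' hadj p ih =>
    by_cases he : s(x', z') = s(u, v)
    · rw [Sym2.eq_iff] at he
      rcases he with ⟨rfl, rfl⟩ | ⟨rfl, rfl⟩
      · rcases ih with h1 | ⟨h1, h2⟩ | ⟨h1, h2⟩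
        · exact Or.inr (Or.inl ⟨Reachable.refl _, h1⟩)
        · exact Or.inr (Or.inl ⟨Reachable.refl _, h2⟩)
        · exact Or.inl h2
      · rcases ih with h1 | ⟨h1, h2⟩ | ⟨h1, h2⟩
        · exact Or.inr (Or.inr ⟨Reachable.refl _, h1⟩)
        · exact Or.inl h2
        · exact Or.inr (Or.inr ⟨Reachable.refl _, h2⟩)
    · have hadj' : (G.deleteEdges {s(u,v)}).Adj x' z' := by
        rw [SimpleGraph.deleteEdges_adj]
        exact ⟨hadj, by simpa using he⟩
      have hr := hadj'.reachable
      rcases ih with h1 | ⟨h1, h2⟩ | ⟨h1, h2⟩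
      · exact Or.inl (hr.trans h1)
      · exact Or.inr (Or.inl ⟨hr.trans h1, h2⟩)
      · exact Or.inr (Or.inr ⟨hr.trans h1, h2⟩)

lemma card_cc_deleteEdge {G : SimpleGraph V} {u v : V} (huv : G.Adj u v)
    (hb : ¬(G.deleteEdges {s(u,v)}).Reachable u v) :
    Nat.card (G.deleteEdges {s(u,v)}).ConnectedComponent
      = Nat.card G.ConnectedComponent + 1 := by
  classical
  set G' := G.deleteEdges {s(u,v)} with hG'
  have hle : G' ≤ G := SimpleGraph.deleteEdges_le _
  letI : Fintype G.ConnectedComponent := Fintype.ofFinite _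
  letI : Fintype G'.ConnectedComponent := Fintype.ofFinite _
  set φ : G'.ConnectedComponent → G.ConnectedComponent :=
    ConnectedComponent.map (Hom.ofLE hle) with hφ
  have hφmk : ∀ x : V, φ (G'.connectedComponentMk x) = G.connectedComponentMk x := by
    intro x; rfl
  have key : ∀ c : G.ConnectedComponent,
      (Finset.univ.filter (fun C' => φ C' = c)).card
        = if c = G.connectedComponentMk u then 2 else 1 := by
    intro c
    induction c using SimpleGraph.ConnectedComponent.ind with
    | _ x =>
    by_cases hxu : G.connectedComponentMk x = G.connectedComponentMk u
    · rw [hxu, if_pos rfl]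
      have hset : Finset.univ.filter (fun C' => φ C' = G.connectedComponentMk u)
          = {G'.connectedComponentMk u, G'.connectedComponentMk v} := by
        ext C'
        induction C' using SimpleGraph.ConnectedComponent.ind with
        | _ y =>
        simp only [Finset.mem_filter, Finset.mem_univ, true_and, Finset.mem_insert,
          Finset.mem_singleton, hφmk]
        constructor
        · intro hy
          have hyu : G.Reachable y u := ConnectedComponent.exact hy
          rcases reach_split (u := u) (v := v) hyu with h1 | ⟨h1, h2⟩ | ⟨h1, h2⟩
          · exact Or.inl (ConnectedComponent.sound h1)
          · exact Or.inl (ConnectedComponent.sound h1)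
          · exact Or.inr (ConnectedComponent.sound h1)
        · intro hy
          rcases hy with h1 | h1
          · exact ConnectedComponent.sound ((ConnectedComponent.exact h1).mono hle)
          · exact ConnectedComponent.sound
              (((ConnectedComponent.exact h1).mono hle).trans huv.symm.reachable)
      rw [hset, Finset.card_pair]
      intro hcon
      exact hb (ConnectedComponent.exact hcon)
    · rw [if_neg hxu]
      have hset : Finset.univ.filter (fun C' => φ C' = G.connectedComponentMk x)
          = {G'.connectedComponentMk x} := by
        ext C'
        induction C' using SimpleGraph.ConnectedComponent.ind with
        | _ y =>
        simp only [Finset.mem_filter, Finset.mem_univ, true_and, Finset.mem_singleton, hφmk]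
        constructor
        · intro hy
          have hyx : G.Reachable y x := ConnectedComponent.exact hy
          rcases reach_split (u := u) (v := v) hyx with h1 | ⟨h1, h2⟩ | ⟨h1, h2⟩
          · exact ConnectedComponent.sound h1
          · exact absurd (ConnectedComponent.sound
              (((h2.mono hle).symm).trans huv.symm.reachable)) hxu
          · exact absurd (ConnectedComponent.sound ((h2.mono hle).symm)) hxu
        · intro hy
          exact ConnectedComponent.sound ((ConnectedComponent.exact hy).mono hle)
      rw [hset, Finset.card_singleton]
  have hsum : (Finset.univ : Finset G'.ConnectedComponent).card
      = ∑ c : G.ConnectedComponent, (Finset.univ.filter (fun C' => φ C' = c)).card :=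
    Finset.card_eq_sum_card_fiberwise (fun C' _ => Finset.mem_univ _)
  rw [Nat.card_eq_fintype_card, Nat.card_eq_fintype_card, ← Finset.card_univ, hsum]
  rw [Finset.sum_congr rfl (fun c _ => key c)]
  have hsplit : ∀ c : G.ConnectedComponent,
      (if c = G.connectedComponentMk u then 2 else 1)
        = 1 + (if c = G.connectedComponentMk u then 1 else 0) := by
    intro c; split <;> rfl
  rw [Finset.sum_congr rfl (fun c _ => hsplit c), Finset.sum_add_distrib]
  simp [Finset.card_univ]

lemma acyclic_card (G : SimpleGraph V) (h : G.IsAcyclic) :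
    Nat.card G.ConnectedComponent + G.edgeSet.ncard = Fintype.card V := by
  classical
  suffices H : ∀ (m : ℕ) (G : SimpleGraph V), G.IsAcyclic → G.edgeSet.ncard = m →
      Nat.card G.ConnectedComponent + G.edgeSet.ncard = Fintype.card V from H _ G h rfl
  intro m
  induction m with
  | zero =>
    intro G hG hm
    have hfin : G.edgeSet.Finite := Set.toFinite _
    have hempty : G.edgeSet = ∅ := (Set.ncard_eq_zero hfin).mp hm
    have hGbot : G = ⊥ := by
      rw [← SimpleGraph.edgeSet_eq_empty]
      exact hempty
    subst hGbot
    rw [hm]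
    have hbij : Nat.card (⊥ : SimpleGraph V).ConnectedComponent = Nat.card V := by
      refine (Nat.card_eq_of_bijective (SimpleGraph.connectedComponentMk ⊥) ⟨?_, ?_⟩).symm
      · intro a b hab
        have := ConnectedComponent.exact hab
        rwa [SimpleGraph.reachable_bot] at this
      · exact fun c => c.exists_rep
    rw [hbij, Nat.card_eq_fintype_card]
    omega
  | succ m ih =>
    intro G hG hm
    have hfin : G.edgeSet.Finite := Set.toFinite _
    have hne : G.edgeSet.Nonempty := by
      rw [Set.nonempty_iff_ne_empty]
      intro hcon
      rw [hcon] at hm; simp at hm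
    obtain ⟨e, he⟩ := hne
    induction e using Sym2.ind with
    | _ u v =>
    have hadj : G.Adj u v := G.mem_edgeSet.mp he
    have hG'edges : (G.deleteEdges {s(u,v)}).edgeSet = G.edgeSet \ {s(u,v)} :=
      SimpleGraph.edgeSet_deleteEdges _
    have hG'card : (G.deleteEdges {s(u,v)}).edgeSet.ncard = m := by
      rw [hG'edges, Set.ncard_diff_singleton_of_mem he]
      omega
    have hG'le : G.deleteEdges {s(u,v)} ≤ G := SimpleGraph.deleteEdges_le _
    have hG'ac : (G.deleteEdges {s(u,v)}).IsAcyclic := by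
      intro x c hc
      exact hG (c.mapLe hG'le) (hc.mapLe hG'le)
    have hbridge : ¬ (G.deleteEdges {s(u,v)}).Reachable u v := by
      have hb := (SimpleGraph.isAcyclic_iff_forall_adj_isBridge.mp hG) hadj
      exact SimpleGraph.isBridge_iff.mp hb
    have hcc := card_cc_deleteEdge hadj hbridge
    have hih := ih (G.deleteEdges {s(u,v)}) hG'ac hG'card
    rw [hG'card] at hih
    rw [hm]
    omega

/-- The multiset of connected-component sizes. -/
noncomputable def compMultiset (G : SimpleGraph V) : Multiset ℕ :=
  letI : Fintype G.ConnectedComponent := Fintype.ofFinite _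
  Finset.univ.val.map fun c : G.ConnectedComponent => Nat.card c.supp

lemma compMultiset_eq (G : SimpleGraph V) [inst : Fintype G.ConnectedComponent] :
    compMultiset G = Finset.univ.val.map fun c : G.ConnectedComponent => Nat.card c.supp := by
  unfold compMultiset
  congr!

lemma compMultiset_card (G : SimpleGraph V) :
    Multiset.card (compMultiset G) = Nat.card G.ConnectedComponent := by
  letI : Fintype G.ConnectedComponent := Fintype.ofFinite _
  rw [compMultiset_eq G, Multiset.card_map, Nat.card_eq_fintype_card]
  exact Finset.card_univ

lemma card_supp_eq (G : SimpleGraph V) (c : G.ConnectedComponent) :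
    Nat.card c.supp = (Finset.univ.filter (fun v : V => G.connectedComponentMk v = c)).card := by
  classical
  rw [Nat.card_eq_card_finite_toFinset (Set.toFinite _)]
  congr 1
  ext v
  simp [ConnectedComponent.mem_supp_iff]

lemma compMultiset_pos (G : SimpleGraph V) : ∀ x ∈ compMultiset G, 0 < x := by
  letI : Fintype G.ConnectedComponent := Fintype.ofFinite _
  intro x hx
  rw [compMultiset_eq G] at hx
  obtain ⟨c, _, rfl⟩ := Multiset.mem_map.mp hx
  have hne : Nonempty c.supp := by
    obtain ⟨w, hw⟩ := c.exists_rep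
    exact ⟨⟨w, by rw [ConnectedComponent.mem_supp_iff]; exact hw⟩⟩
  exact Nat.card_pos

lemma compMultiset_sum (G : SimpleGraph V) : (compMultiset G).sum = Fintype.card V := by
  classical
  letI : Fintype G.ConnectedComponent := Fintype.ofFinite _
  rw [compMultiset_eq G]
  have h1 : (Finset.univ.val.map fun c : G.ConnectedComponent => Nat.card c.supp).sum
      = ∑ c : G.ConnectedComponent, Nat.card c.supp := rfl
  rw [h1, Finset.sum_congr rfl fun c _ => card_supp_eq G c]
  rw [← Finset.card_eq_sum_card_fiberwise (f := fun v => G.connectedComponentMk v)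
    (t := Finset.univ) (fun v _ => Finset.mem_univ _)]
  exact Finset.card_univ

lemma ncard_fiber (G : SimpleGraph V) [Fintype G.ConnectedComponent]
    (f : G.ConnectedComponent → ℕ) (t : ℕ) :
    {v : V | f (G.connectedComponentMk v) = t}.ncard
      = ∑ c : G.ConnectedComponent, if f c = t then Nat.card c.supp else 0 := by
  classical
  have hA : {v : V | f (G.connectedComponentMk v) = t}.ncard
      = (Finset.univ.filter (fun v : V => f (G.connectedComponentMk v) = t)).card := by
    rw [Set.ncard_eq_toFinset_card', Set.toFinset_setOf]
  rw [hA]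
  rw [Finset.card_eq_sum_card_fiberwise (f := fun v => G.connectedComponentMk v)
    (t := Finset.univ.filter (fun c => f c = t))
    (fun v hv => by
      simp only [Finset.mem_coe, Finset.mem_filter, Finset.mem_univ, true_and] at hv ⊢
      exact hv)]
  rw [← Finset.sum_filter]
  apply Finset.sum_congr rfl
  intro c hc
  rw [card_supp_eq G c]
  congr 1
  ext v
  simp only [Finset.mem_filter, Finset.mem_univ, true_and] at hc ⊢
  constructor
  · exact fun h => h.2
  · intro h; exact ⟨by rw [h]; exact hc, h⟩

lemma coeff_pProd_comp (G : SimpleGraph V) (d : ℕ →₀ ℕ) :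
    pProd (compMultiset G) d =
      (Nat.card {κ : V → ℕ | (∀ ⦃x y : V⦄, G.Reachable x y → κ x = κ y) ∧
        ∀ t, {v | κ v = t}.ncard = d t} : ℤ) := by
  classical
  letI : Fintype G.ConnectedComponent := Fintype.ofFinite _
  rw [compMultiset_eq G]
  have h1 : pProd (Finset.univ.val.map fun c : G.ConnectedComponent => Nat.card c.supp)
      = ∏ c : G.ConnectedComponent, psum (Nat.card c.supp) := by
    unfold pProd
    rw [Multiset.map_map]
    rfl
  have hpos : ∀ c : G.ConnectedComponent, Nat.card c.supp ≠ 0 := by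
    intro c
    obtain ⟨w, hw⟩ := c.exists_rep
    have : Nonempty c.supp := ⟨⟨w, by rw [ConnectedComponent.mem_supp_iff]; exact hw⟩⟩
    exact Nat.card_pos.ne'
  rw [h1, coeff_prod_psum' _ hpos d]
  congr 1
  apply Nat.card_congr
  refine Equiv.ofBijective
    (fun fp => ⟨fun v => fp.1 (G.connectedComponentMk v), ?_, ?_⟩) ⟨?_, ?_⟩
  · intro x y hxy
    simp only []
    rw [ConnectedComponent.sound hxy]
  · intro t
    rw [ncard_fiber G fp.1 t]
    exact fp.2 t
  · intro fp1 fp2 hf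
    apply Subtype.ext
    funext c
    induction c using SimpleGraph.ConnectedComponent.ind with
    | _ x =>
    have := congrArg Subtype.val hf
    exact congrFun this x
  · intro κp
    obtain ⟨κ, hconst, hsize⟩ := κp
    refine ⟨⟨ConnectedComponent.lift κ (fun a b p _ => hconst ⟨p⟩), ?_⟩, ?_⟩
    · intro t
      have := ncard_fiber G (ConnectedComponent.lift κ (fun a b p _ => hconst ⟨p⟩)) t
      rw [← this]
      have hEq : {v : V | (ConnectedComponent.lift κ (fun a b p _ => hconst ⟨p⟩))
          (G.connectedComponentMk v) = t} = {v : V | κ v = t} := by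
        rfl
      rw [hEq]
      exact hsize t
    · apply Subtype.ext
      funext v
      rfl

end GraphLemmas
section Whitney
open Finset
open scoped Classical

variable {V : Type*} [Fintype V]

lemma sizes_finite (d : ℕ →₀ ℕ) :
    {κ : V → ℕ | ∀ t : ℕ, {v | κ v = t}.ncard = d t}.Finite := by
  apply Set.Finite.subset (Set.Finite.pi (fun _ : V => d.support.finite_toSet))
  intro κ hκ
  rw [Set.mem_pi]
  intro v _
  simp only [Finset.coe_sort_coe, Finset.mem_coe, Finsupp.mem_support_iff]
  have h := hκ (κ v)
  have hpos := (Set.ncard_pos (Set.toFinite {w | κ w = κ v})).mpr ⟨v, rfl⟩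
  omega

lemma finsum_one' (s : Set V) : (∑ᶠ v ∈ s, (1:ℕ)) = s.ncard := by
  rw [← Set.Finite.coe_toFinset (Set.toFinite s), finsum_mem_coe_finset]
  rw [Finset.sum_const, smul_eq_mul, mul_one, Set.Finite.coe_toFinset]
  rw [Set.ncard_eq_toFinset_card']
  congr 1
  ext v
  simp only [Set.Finite.mem_toFinset, Set.mem_toFinset]

lemma const_iff_mono (A : Finset (Sym2 V)) (κ : V → ℕ) :
    (∀ ⦃x y : V⦄, (SimpleGraph.fromEdgeSet (↑A : Set (Sym2 V))).Reachable x y → κ x = κ y)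
      ↔ ∀ u v : V, s(u,v) ∈ A → κ u = κ v := by
  constructor
  · intro h u v huv
    rcases eq_or_ne u v with rfl | hne
    · rfl
    · refine h (SimpleGraph.Adj.reachable ?_)
      rw [SimpleGraph.fromEdgeSet_adj]
      exact ⟨by simpa using huv, hne⟩
  · intro h x y hxy
    obtain ⟨w⟩ := hxy
    induction w with
    | nil => rfl
    | @cons a b c hadj p ih =>
      rw [SimpleGraph.fromEdgeSet_adj] at hadj
      have h1 : κ a = κ b := h a b (by simpa using hadj.1)
      rw [h1]
      exact ih

lemma whitney (F : SimpleGraph V) (d : ℕ →₀ ℕ) :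
    csf F d = ∑ A ∈ (Set.toFinite F.edgeSet).toFinset.powerset,
      (-1:ℤ)^A.card * pProd (compMultiset (SimpleGraph.fromEdgeSet (↑A : Set (Sym2 V)))) d := by
  classical
  set E := (Set.toFinite F.edgeSet).toFinset with hE
  set Sfin := (sizes_finite (V := V) d).toFinset with hSfin
  have hmemS : ∀ κ : V → ℕ, κ ∈ Sfin ↔ ∀ t : ℕ, {v | κ v = t}.ncard = d t := by
    intro κ
    rw [hSfin, Set.Finite.mem_toFinset]
    rfl
  -- Step A : coefficient of each pProd counts colorings constant on components
  have hstep : ∀ A ∈ E.powerset,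
      pProd (compMultiset (SimpleGraph.fromEdgeSet (↑A : Set (Sym2 V)))) d
      = ((Sfin.filter (fun κ => ∀ u v : V, s(u,v) ∈ A → κ u = κ v)).card : ℤ) := by
    intro A _
    rw [coeff_pProd_comp]
    norm_cast
    have hsub : {κ : V → ℕ |
        (∀ ⦃x y : V⦄, (SimpleGraph.fromEdgeSet (↑A : Set (Sym2 V))).Reachable x y → κ x = κ y) ∧
        ∀ t, {v | κ v = t}.ncard = d t}.Finite :=
      (sizes_finite (V := V) d).subset (fun κ hκ => hκ.2)
    rw [Nat.card_eq_card_finite_toFinset hsub]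
    congr 1
    ext κ
    rw [Set.Finite.mem_toFinset, Finset.mem_filter, hmemS, Set.mem_setOf_eq, const_iff_mono]
    tauto
  -- Step B : csf coefficient counts proper colorings
  have hcsf : csf F d = ((Sfin.filter (fun κ => ProperCol F.edgeSet κ)).card : ℤ) := by
    show ((Nat.card {k : V → ℕ |
      ProperCol F.edgeSet k ∧ ∀ i : ℕ, (∑ᶠ v ∈ {v : V | k v = i}, (1:ℕ)) = d i} : ℕ) : ℤ) = _
    norm_cast
    have hsub : {k : V → ℕ |
        ProperCol F.edgeSet k ∧ ∀ i : ℕ, (∑ᶠ v ∈ {v : V | k v = i}, (1:ℕ)) = d i}.Finite := by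
      apply (sizes_finite (V := V) d).subset
      intro κ hκ t
      rw [← finsum_one']
      exact hκ.2 t
    rw [Nat.card_eq_card_finite_toFinset hsub]
    congr 1
    ext κ
    rw [Set.Finite.mem_toFinset, Finset.mem_filter, hmemS, Set.mem_setOf_eq]
    constructor
    · intro ⟨h1, h2⟩
      exact ⟨fun t => by rw [← finsum_one']; exact h2 t, h1⟩
    · intro ⟨h1, h2⟩
      exact ⟨h2, fun t => by rw [finsum_one']; exact h1 t⟩
  -- Step C : inclusion-exclusion
  rw [hcsf]
  have hrw : ∑ A ∈ E.powerset,
      (-1:ℤ)^A.card * pProd (compMultiset (SimpleGraph.fromEdgeSet (↑A : Set (Sym2 V)))) d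
      = ∑ A ∈ E.powerset, (-1:ℤ)^A.card
          * ((Sfin.filter (fun κ => ∀ u v : V, s(u,v) ∈ A → κ u = κ v)).card : ℤ) :=
    Finset.sum_congr rfl (fun A hA => by rw [hstep A hA])
  rw [hrw]
  have hswap : ∑ A ∈ E.powerset, (-1:ℤ)^A.card
        * ((Sfin.filter (fun κ => ∀ u v : V, s(u,v) ∈ A → κ u = κ v)).card : ℤ)
      = ∑ κ ∈ Sfin, ∑ A ∈ E.powerset,
          (if ∀ u v : V, s(u,v) ∈ A → κ u = κ v then (-1:ℤ)^A.card else 0) := by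
    rw [Finset.sum_comm]
    apply Finset.sum_congr rfl
    intro A _
    rw [Finset.card_filter]
    push_cast
    rw [Finset.mul_sum]
    apply Finset.sum_congr rfl
    intro κ _
    split <;> simp
  rw [hswap]
  have hinner : ∀ κ ∈ Sfin, ∑ A ∈ E.powerset,
      (if ∀ u v : V, s(u,v) ∈ A → κ u = κ v then (-1:ℤ)^A.card else 0)
      = if ProperCol F.edgeSet κ then 1 else 0 := by
    intro κ _
    set Mκ : Finset (Sym2 V) := E.filter
      (fun e => Sym2.lift ⟨fun u v => κ u = κ v, fun u v => propext (eq_comm)⟩ e) with hMκ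
    have hM1 : ∀ A ∈ E.powerset, ((∀ u v : V, s(u,v) ∈ A → κ u = κ v) ↔ A ⊆ Mκ) := by
      intro A hA
      rw [Finset.mem_powerset] at hA
      constructor
      · intro h e he
        rw [hMκ, Finset.mem_filter]
        refine ⟨hA he, ?_⟩
        induction e using Sym2.ind with
        | _ u v => exact h u v he
      · intro h u v huv
        have := h huv
        rw [hMκ, Finset.mem_filter] at this
        exact this.2
    have hsum1 : ∑ A ∈ E.powerset,
        (if ∀ u v : V, s(u,v) ∈ A → κ u = κ v then (-1:ℤ)^A.card else 0)
        = ∑ A ∈ E.powerset, (if A ⊆ Mκ then (-1:ℤ)^A.card else 0) := by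
      apply Finset.sum_congr rfl
      intro A hA
      rw [if_congr (hM1 A hA) rfl rfl]
    rw [hsum1, ← Finset.sum_filter]
    have hMsub : Mκ ⊆ E := Finset.filter_subset _ _
    have hps : E.powerset.filter (fun A => A ⊆ Mκ) = Mκ.powerset := by
      ext B
      simp only [Finset.mem_filter, Finset.mem_powerset]
      constructor
      · exact fun h => h.2
      · exact fun h => ⟨h.trans hMsub, h⟩
    rw [hps, Finset.sum_powerset_neg_one_pow_card]
    have hiff : Mκ = ∅ ↔ ProperCol F.edgeSet κ := by
      rw [Finset.filter_eq_empty_iff]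
      constructor
      · intro h u v huv
        intro hcon
        refine h (x := s(u,v)) ?_ ?_
        · rw [hE, Set.Finite.mem_toFinset]
          exact huv
        · simpa using hcon
      · intro h e he
        induction e using Sym2.ind with
        | _ u v =>
          rw [hE, Set.Finite.mem_toFinset] at he
          simpa using h u v he
    rw [if_congr hiff rfl rfl]
  rw [Finset.sum_congr rfl hinner, Finset.sum_boole]

end Whitney
section LinIndep
open Finset
open scoped Classical

lemma pProd_eq_prod_get (m : Multiset ℕ) :
    pProd m = ∏ i : Fin m.toList.length, psum (m.toList.get i) := by
  unfold pProd
  conv_lhs => rw [← Multiset.coe_toList m, Multiset.map_coe, Multiset.prod_coe,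
    ← List.ofFn_get m.toList, List.map_ofFn, List.prod_ofFn]
  rfl

lemma pProd_coeff_count (m : Multiset ℕ) (hm : ∀ x ∈ m, x ≠ 0) (d : ℕ →₀ ℕ) :
    pProd m d = (Nat.card (CCond (fun i : Fin m.toList.length => m.toList.get i) d) : ℤ) := by
  rw [pProd_eq_prod_get m]
  exact coeff_prod_psum _ _
    (fun i => hm _ (Multiset.mem_toList.mp (List.get_mem _ i))) d

lemma pProd_lin_indep {N : ℕ} (a : N.Partition → ℤ)
    (h : ∀ d : ℕ →₀ ℕ, (∑ lam : N.Partition, a lam * pProd lam.parts d) = 0)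
    (lam : N.Partition) : a lam = 0 := by
  classical
  by_contra hcon
  set s : Finset N.Partition := Finset.univ.filter (fun mu => a mu ≠ 0) with hs
  have hne : s.Nonempty := ⟨lam, by rw [hs, Finset.mem_filter]; exact ⟨Finset.mem_univ _, hcon⟩⟩
  obtain ⟨lam0, hlam0s, hmax⟩ := Finset.exists_max_image s (fun mu => mu.parts.card) hne
  have ha0 : a lam0 ≠ 0 := (Finset.mem_filter.mp hlam0s).2
  set l0 := lam0.parts.toList with hl0
  set k0 := l0.length with hk0
  have hk0card : k0 = lam0.parts.card := by rw [hk0, hl0]; exact Multiset.length_toList _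
  have hl0pos : ∀ i : Fin l0.length, l0.get i ≠ 0 := by
    intro i
    have hmem : l0.get i ∈ lam0.parts :=
      Multiset.mem_toList.mp (List.get_mem _ i)
    exact (lam0.parts_pos hmem).ne'
  have hd0supp : ∀ t : ℕ, (fun t => if h : t < k0 then l0.get ⟨t, h⟩ else 0) t ≠ 0 →
      t ∈ Finset.range k0 := by
    intro t ht
    rw [Finset.mem_range]
    by_contra hc
    have ht' : (if h : t < k0 then l0.get ⟨t, h⟩ else 0) ≠ 0 := ht
    rw [dif_neg hc] at ht'
    exact ht' rfl
  set d0 : ℕ →₀ ℕ := Finsupp.onFinset (Finset.range k0)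
    (fun t => if h : t < k0 then l0.get ⟨t, h⟩ else 0) hd0supp with hd0
  have hd0app : ∀ t : ℕ, d0 t = if h : t < k0 then l0.get ⟨t, h⟩ else 0 := fun t => rfl
  have hd0pos : ∀ t, t < k0 → d0 t ≠ 0 := by
    intro t ht; rw [hd0app t, dif_pos ht]; exact hl0pos ⟨t, ht⟩
  have hd0zero : ∀ t, ¬ t < k0 → d0 t = 0 := by
    intro t ht; rw [hd0app t, dif_neg ht]
  -- other partitions have vanishing coefficient at d0
  have hother : ∀ mu : N.Partition, mu ∈ s → mu ≠ lam0 → pProd mu.parts d0 = 0 := by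
    intro mu hmus hnemu
    by_contra hcoeff
    have hmupos : ∀ x ∈ mu.parts, x ≠ 0 := fun x hx => (mu.parts_pos hx).ne'
    rw [pProd_coeff_count mu.parts hmupos d0] at hcoeff
    have hlmupos : ∀ i : Fin mu.parts.toList.length, mu.parts.toList.get i ≠ 0 :=
      fun i => hmupos _ (Multiset.mem_toList.mp (List.get_mem _ i))
    have hcard0 : Nat.card
        (CCond (fun i : Fin mu.parts.toList.length => mu.parts.toList.get i) d0) ≠ 0 := by
      intro hc
      rw [hc] at hcoeff
      exact hcoeff rfl
    have hnonempty : (CCond (fun i : Fin mu.parts.toList.length =>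
        mu.parts.toList.get i) d0).Nonempty :=
      Set.nonempty_coe_sort.mp (Nat.card_ne_zero.mp hcard0).1
    obtain ⟨f, hf⟩ := hnonempty
    have hf' : ∀ t : ℕ, (∑ i, if f i = t then mu.parts.toList.get i else 0) = d0 t := hf
    have hsurj : ∀ t, t < k0 → ∃ i, f i = t := by
      intro t ht
      by_contra hc
      push_neg at hc
      have hzero : (∑ i, if f i = t then mu.parts.toList.get i else 0) = 0 :=
        Finset.sum_eq_zero (fun i _ => if_neg (hc i))
      exact hd0pos t ht (by rw [← hf' t, hzero])
    have hgesub : Finset.range k0 ⊆ Finset.image f Finset.univ := by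
      intro t ht
      rw [Finset.mem_range] at ht
      obtain ⟨i, hi⟩ := hsurj t ht
      exact Finset.mem_image.mpr ⟨i, Finset.mem_univ i, hi⟩
    have hge : k0 ≤ mu.parts.toList.length := by
      calc k0 = (Finset.range k0).card := (Finset.card_range k0).symm
      _ ≤ (Finset.image f Finset.univ).card := Finset.card_le_card hgesub
      _ ≤ (Finset.univ : Finset (Fin mu.parts.toList.length)).card := Finset.card_image_le
      _ = mu.parts.toList.length := by rw [Finset.card_univ, Fintype.card_fin]
    have hlemu : mu.parts.toList.length = mu.parts.card := Multiset.length_toList _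
    have hle : mu.parts.card ≤ lam0.parts.card := hmax mu hmus
    have heq : mu.parts.toList.length = k0 := by omega
    have hmaps : ∀ i, f i < k0 := by
      intro i
      by_contra hc
      have h1 := mem_ccond_apply_mem_support hf i
      rw [hd0zero (f i) hc] at h1
      exact hlmupos i (Nat.le_zero.mp h1)
    have himgsub : Finset.image f Finset.univ ⊆ Finset.range k0 := by
      intro t ht
      rw [Finset.mem_image] at ht
      obtain ⟨i, _, rfl⟩ := ht
      exact Finset.mem_range.mpr (hmaps i)
    have himg : Finset.image f Finset.univ = Finset.range k0 :=
      Finset.Subset.antisymm himgsub hgesub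
    have hinjon : Set.InjOn f ↑(Finset.univ : Finset (Fin mu.parts.toList.length)) := by
      apply Finset.card_image_iff.mp
      rw [himg, Finset.card_range, Finset.card_univ, Fintype.card_fin, heq]
    have hinj : Function.Injective f := fun i j hij =>
      hinjon (Finset.mem_coe.mpr (Finset.mem_univ i)) (Finset.mem_coe.mpr (Finset.mem_univ j)) hij
    have hval : ∀ i, mu.parts.toList.get i = d0 (f i) := by
      intro i
      rw [← hf' (f i)]
      rw [Finset.sum_eq_single i]
      · rw [if_pos rfl]
      · intro j _ hji
        exact if_neg (fun hc => hji (hinj hc))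
      · intro hni; exact absurd (Finset.mem_univ i) hni
    have hμparts : mu.parts = Multiset.map (fun i => d0 (f i)) Finset.univ.val := by
      have h1 : mu.parts = Multiset.map (mu.parts.toList.get) (Finset.univ.val) := by
        conv_lhs => rw [← Multiset.coe_toList mu.parts,
          ← List.map_get_finRange mu.parts.toList]
        rfl
      exact h1.trans (Multiset.map_congr rfl (fun i _ => hval i))
    have hμ3 : Multiset.map f Finset.univ.val = (Finset.range k0).val := by
      have h2 : (Finset.image f Finset.univ).val = Multiset.map f Finset.univ.val := by
        rw [Finset.image_val, Multiset.dedup_eq_self.mpr (Finset.univ.nodup.map hinj)]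
      rw [← h2, himg]
    have hμ4 : mu.parts = Multiset.map d0 ((Finset.range k0).val) := by
      rw [← hμ3, Multiset.map_map]
      exact hμparts
    have hlam0parts : lam0.parts = Multiset.map d0 ((Finset.range k0).val) := by
      have hlist : (List.range k0).map d0 = l0 := by
        apply List.ext_get
        · rw [List.length_map, List.length_range]
        · intro i h1 h2
          simp only [List.get_eq_getElem, List.getElem_map, List.getElem_range]
          have hik : i < k0 := by rwa [List.length_map, List.length_range] at h1
          have hv := hd0app i
          rw [dif_pos hik] at hv
          rw [hv]
          rfl
      calc lam0.parts = ↑l0 := (Multiset.coe_toList lam0.parts).symm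
      _ = ↑((List.range k0).map d0) := by rw [hlist]
      _ = Multiset.map d0 ↑(List.range k0) := by rw [Multiset.map_coe]
      _ = Multiset.map d0 ((Finset.range k0).val) := rfl
    exact hnemu (Nat.Partition.ext (by rw [hμ4, hlam0parts]))
  -- conclude
  have hsum : ∑ mu : N.Partition, a mu * pProd mu.parts d0 = a lam0 * pProd lam0.parts d0 := by
    apply Finset.sum_eq_single lam0
    · intro mu _ hne2
      by_cases hmu : a mu = 0
      · rw [hmu, zero_mul]
      · rw [hother mu (by rw [hs, Finset.mem_filter]; exact ⟨Finset.mem_univ _, hmu⟩) hne2,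
          mul_zero]
    · intro hni; exact absurd (Finset.mem_univ lam0) hni
  have hmain := h d0
  rw [hsum] at hmain
  have hcpos : pProd lam0.parts d0 ≠ 0 := by
    rw [pProd_coeff_count lam0.parts (fun x hx => (lam0.parts_pos hx).ne') d0]
    have hnonempty : (CCond (fun i : Fin lam0.parts.toList.length =>
        lam0.parts.toList.get i) d0).Nonempty := by
      refine ⟨fun i => (i : ℕ), ?_⟩
      intro t
      by_cases ht : t < k0
      · rw [hd0app t, dif_pos ht]
        rw [Finset.sum_eq_single (⟨t, ht⟩ : Fin k0)]
        · rw [if_pos rfl]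
        · intro j _ hji
          exact if_neg (fun hc => hji (by apply Fin.ext; exact hc))
        · intro hni; exact absurd (Finset.mem_univ _) hni
      · rw [hd0app t, dif_neg ht]
        apply Finset.sum_eq_zero
        intro i _
        exact if_neg (fun hc => ht (by rw [← hc]; exact i.isLt))
    have hfin : (CCond (fun i : Fin lam0.parts.toList.length =>
        lam0.parts.toList.get i) d0).Finite := ccond_finite _ hl0pos d0
    have : Nat.card (CCond (fun i : Fin lam0.parts.toList.length =>
        lam0.parts.toList.get i) d0) ≠ 0 :=
      Nat.card_ne_zero.mpr ⟨Set.nonempty_coe_sort.mpr hnonempty, hfin.to_subtype⟩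
    exact_mod_cast this
  exact ha0 ((mul_eq_zero.mp hmain).resolve_right hcpos)

end LinIndep
/-- for a forest `F` on `n` vertices with `j` components,
`Σ_{lam : l(lam) = k} c_lam(F) = (-1)^(n-k) C(n-j, k-j)` for every `k`
(the binomial coefficient being `0` when `k < j`). -/
theorem stmt4 {V : Type*} [Fintype V] (F : SimpleGraph V) (hF : F.IsAcyclic)
    (n : Nat) (hn : Fintype.card V = n)
    (j : Nat) (hj : j = Nat.card F.ConnectedComponent)
    (c : n.Partition → Int)
    (hc : csf F = ∑ᶠ lam : n.Partition, c lam • pProd lam.parts)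
    (k : Nat) :
    (∑ᶠ lam ∈ {lam : n.Partition | lam.parts.card = k}, c lam) =
      (-1 : Int) ^ (n - k) * (if j ≤ k then ((n - j).choose (k - j) : Int) else 0) := by
  classical
  subst hn
  set E := (Set.toFinite F.edgeSet).toFinset with hE
  set pt : Finset (Sym2 V) → (Fintype.card V).Partition := fun A =>
    ⟨compMultiset (SimpleGraph.fromEdgeSet (↑A : Set (Sym2 V))),
     fun {i} hi => compMultiset_pos _ i hi,
     compMultiset_sum _⟩ with hpt
  set b : (Fintype.card V).Partition → ℤ := fun lam =>
    ∑ A ∈ E.powerset.filter (fun A => pt A = lam), (-1:ℤ)^A.card with hb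
  -- grouped Whitney expansion
  have hgw : ∀ d : ℕ →₀ ℕ, csf F d
      = ∑ lam : (Fintype.card V).Partition, b lam * pProd lam.parts d := by
    intro d
    calc csf F d
        = ∑ A ∈ E.powerset, (-1:ℤ)^A.card
            * pProd (compMultiset (SimpleGraph.fromEdgeSet (↑A : Set (Sym2 V)))) d :=
          whitney F d
      _ = ∑ A ∈ E.powerset, (-1:ℤ)^A.card * pProd ((pt A).parts) d := by
          apply Finset.sum_congr rfl
          intro A _
          rfl
      _ = ∑ lam : (Fintype.card V).Partition, ∑ A ∈ E.powerset.filter (fun A => pt A = lam),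
            (-1:ℤ)^A.card * pProd ((pt A).parts) d :=
          (Finset.sum_fiberwise _ _ _).symm
      _ = ∑ lam : (Fintype.card V).Partition, b lam * pProd lam.parts d := by
          apply Finset.sum_congr rfl
          intro lam _
          rw [hb, Finset.sum_mul]
          apply Finset.sum_congr rfl
          intro A hA
          rw [(Finset.mem_filter.mp hA).2]
  -- expansion from the hypothesis
  have hcd : ∀ d : ℕ →₀ ℕ, csf F d
      = ∑ lam : (Fintype.card V).Partition, c lam * pProd lam.parts d := by
    intro d
    rw [hc, finsum_eq_sum_of_fintype]
    rw [show ((∑ lam : (Fintype.card V).Partition, c lam • pProd lam.parts) d)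
        = MvPowerSeries.coeff d (∑ lam : (Fintype.card V).Partition, c lam • pProd lam.parts)
        from rfl]
    rw [map_sum]
    apply Finset.sum_congr rfl
    intro lam _
    exact MvPowerSeries.coeff_smul (pProd lam.parts) d (c lam)
  have hzero : ∀ d : ℕ →₀ ℕ,
      (∑ lam : (Fintype.card V).Partition, (c lam - b lam) * pProd lam.parts d) = 0 := by
    intro d
    have h1 := (hcd d).symm.trans (hgw d)
    rw [Finset.sum_congr rfl (fun lam (_ : lam ∈ Finset.univ) =>
      sub_mul (c lam) (b lam) (pProd lam.parts d)), Finset.sum_sub_distrib, h1, sub_self]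
  have hcb : ∀ lam, c lam = b lam := fun lam =>
    sub_eq_zero.mp (pProd_lin_indep _ hzero lam)
  -- edge counts
  have hEcount : Nat.card F.ConnectedComponent + E.card = Fintype.card V := by
    have h2 := acyclic_card F hF
    rwa [Set.ncard_eq_toFinset_card _ (Set.toFinite F.edgeSet)] at h2
  have hjN : j ≤ Fintype.card V := by omega
  have hEcard : E.card = Fintype.card V - j := by omega
  -- per-subset facts
  have hAfact : ∀ A ∈ E.powerset, (pt A).parts.card = Fintype.card V - A.card
      ∧ A.card ≤ Fintype.card V - j := by
    intro A hA
    rw [Finset.mem_powerset] at hA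
    have hsub : (↑A : Set (Sym2 V)) ⊆ F.edgeSet := by
      intro e he
      have h2 := hA (Finset.mem_coe.mp he)
      rwa [hE, Set.Finite.mem_toFinset] at h2
    have hedge : (SimpleGraph.fromEdgeSet (↑A : Set (Sym2 V))).edgeSet = ↑A := by
      rw [SimpleGraph.edgeSet_fromEdgeSet]
      ext e
      simp only [Set.mem_diff, Set.mem_setOf_eq]
      constructor
      · exact fun h => h.1
      · intro h
        exact ⟨h, SimpleGraph.not_isDiag_of_mem_edgeSet F (hsub h)⟩
    have hle2 : SimpleGraph.fromEdgeSet (↑A : Set (Sym2 V)) ≤ F := by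
      have h2 := SimpleGraph.fromEdgeSet_mono hsub
      rwa [SimpleGraph.fromEdgeSet_edgeSet] at h2
    have hac : (SimpleGraph.fromEdgeSet (↑A : Set (Sym2 V))).IsAcyclic := by
      intro x cyc hcyc
      exact hF (cyc.mapLe hle2) (hcyc.mapLe hle2)
    have hcount := acyclic_card _ hac
    rw [hedge, Set.ncard_coe_finset] at hcount
    have hparts : (pt A).parts.card
        = Nat.card (SimpleGraph.fromEdgeSet (↑A : Set (Sym2 V))).ConnectedComponent :=
      compMultiset_card _
    have hcard_le : A.card ≤ E.card := Finset.card_le_card hA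
    constructor
    · omega
    · omega
  -- rewrite the goal
  have hsetrw : {lam : (Fintype.card V).Partition | lam.parts.card = k}
      = ↑(Finset.univ.filter (fun lam : (Fintype.card V).Partition => lam.parts.card = k)) := by
    ext lam
    simp
  rw [hsetrw, finsum_mem_coe_finset]
  rw [Finset.sum_congr rfl (fun lam _ => hcb lam)]
  simp only [hb]
  rw [Finset.sum_fiberwise_eq_sum_filter]
  have hfilter2 : E.powerset.filter (fun A => pt A ∈ Finset.univ.filter
      (fun lam : (Fintype.card V).Partition => lam.parts.card = k))
      = E.powerset.filter (fun A => (pt A).parts.card = k) := by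
    apply Finset.filter_congr
    intro A _
    simp
  rw [hfilter2]
  by_cases hk : k ≤ Fintype.card V
  · have hfilter3 : E.powerset.filter (fun A => (pt A).parts.card = k)
        = Finset.powersetCard (Fintype.card V - k) E := by
      rw [Finset.powersetCard_eq_filter]
      apply Finset.filter_congr
      intro A hA
      have h3 := hAfact A hA
      constructor <;> intro h4 <;> omega
    rw [hfilter3]
    rw [Finset.sum_congr rfl (fun A hA => by rw [(Finset.mem_powersetCard.mp hA).2])]
    rw [Finset.sum_const, Finset.card_powersetCard, hEcard, nsmul_eq_mul]
    by_cases hjk : j ≤ k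
    · rw [if_pos hjk]
      have hch : (Fintype.card V - j).choose (Fintype.card V - k)
          = (Fintype.card V - j).choose (k - j) := by
        rw [show Fintype.card V - k = (Fintype.card V - j) - (k - j) from by omega]
        exact Nat.choose_symm (by omega)
      rw [hch]
      ring
    · rw [if_neg hjk]
      rw [Nat.choose_eq_zero_of_lt (show Fintype.card V - j < Fintype.card V - k from by omega)]
      simp
  · have hfilter3 : E.powerset.filter (fun A => (pt A).parts.card = k) = ∅ := by
      rw [Finset.filter_eq_empty_iff]
      intro A hA
      have h3 := hAfact A hA
      omega
    rw [hfilter3, Finset.sum_empty]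
    rw [if_pos (show j ≤ k from by omega)]
    rw [Nat.choose_eq_zero_of_lt (show Fintype.card V - j < k - j from by omega)]
    simp
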